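/- For any global state σ, the function pfailvec(σ,·) is a discrete probability distribution over the set F_σ of possible failure vectors of σ: ∑_{F ∈ F_σ} pfailvec(σ, F) = 1. -/

import Mathlib

/-- `alphaF T pert ref σ F Φ` is the number of oscillators with phase greater
than `Φ` perceived to be firing by oscillators with phase `Φ`, in global state
`σ` with failure vector `F` (entries `none` represent ★).  It is computed
downwards from phase `T` (where it is `0`). -/
def alphaF (T : ℕ) (pert ref : ℕ → ℕ → ℕ) (σ : ℕ → ℕ) (F : ℕ → Option ℕ) (Φ : ℕ) : ℕ :=
  if h : T ≤ Φ then 0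
  else
    let a := alphaF T pert ref σ F (Φ + 1)
    match F (Φ + 1) with
    | none => a
    | some f => if T < 1 + ref (Φ + 1) (pert (Φ + 1) a) then a + σ (Φ + 1) - f else a
termination_by T - Φ
decreasing_by omega

/-- `update^Φ(σ,F) = 1 + ref(Φ, pert(Φ, α^Φ(σ,F), ε))`. -/
def updateF (T : ℕ) (pert ref : ℕ → ℕ → ℕ) (σ : ℕ → ℕ) (F : ℕ → Option ℕ) (Φ : ℕ) : ℕ :=
  1 + ref Φ (pert Φ (alphaF T pert ref σ F Φ))

/-- The phase transition function: firing phases are mapped to `1`, all other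
phases to their updated value. -/
def tauF (T : ℕ) (pert ref : ℕ → ℕ → ℕ) (σ : ℕ → ℕ) (F : ℕ → Option ℕ) (Φ : ℕ) : ℕ :=
  if T < updateF T pert ref σ F Φ then 1 else updateF T pert ref σ F Φ

/-- The successor of global state `σ` under failure vector `F`: phase `Φ`
receives the total count of the phases mapped to `Φ` by `tauF`. -/
def sucF (T : ℕ) (pert ref : ℕ → ℕ → ℕ) (σ : ℕ → ℕ) (F : ℕ → Option ℕ) : ℕ → ℕ :=
  fun Φ => ∑ Ψ ∈ Finset.Icc 1 T, if tauF T pert ref σ F Ψ = Φ then σ Ψ else 0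

/-- The set of possible failure vectors of a global state `σ`: at every phase
`Φ ∈ {1,…,T}` that fires, any number `f ≤ k_Φ` of broadcast failures may occur
(`F Φ = some f`); at non-firing phases the entry is ★ (`F Φ = none`), and
entries outside `{1,…,T}` are ★. -/
def failSet (T : ℕ) (pert ref : ℕ → ℕ → ℕ) (σ : ℕ → ℕ) : Set (ℕ → Option ℕ) :=
  { F | (∀ Φ, 1 ≤ Φ → Φ ≤ T →
          ((T < updateF T pert ref σ F Φ → ∃ f, F Φ = some f ∧ f ≤ σ Φ) ∧
           (¬ T < updateF T pert ref σ F Φ → F Φ = none))) ∧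
        (∀ Φ, Φ = 0 ∨ T < Φ → F Φ = none) }

/-- `pfail(k,f) = μ^f (1−μ)^(k−f) C(k,f)`. -/
def pfailR (μ : ℝ) (k f : ℕ) : ℝ := μ ^ f * (1 - μ) ^ (k - f) * (k.choose f : ℝ)

/-- `pfailvec(σ,F) = ∏_{Φ=1}^T pfail(k_Φ, f_Φ)`, with factor `1` for ★ entries. -/
def pfailvecR (μ : ℝ) (T : ℕ) (σ : ℕ → ℕ) (F : ℕ → Option ℕ) : ℝ :=
  ∏ Φ ∈ Finset.Icc 1 T, (match F Φ with | some f => pfailR μ (σ Φ) f | none => 1)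

namespace PFAux

lemma alphaF_stop (T : ℕ) (pert ref : ℕ → ℕ → ℕ) (σ : ℕ → ℕ) (F : ℕ → Option ℕ) (Φ : ℕ)
    (h : T ≤ Φ) : alphaF T pert ref σ F Φ = 0 := by
  conv_lhs => rw [alphaF]
  simp [h]

lemma alphaF_go (T : ℕ) (pert ref : ℕ → ℕ → ℕ) (σ : ℕ → ℕ) (F : ℕ → Option ℕ) (Φ : ℕ)
    (h : ¬ T ≤ Φ) : alphaF T pert ref σ F Φ =
      (match F (Φ + 1) with
      | none => alphaF T pert ref σ F (Φ + 1)
      | some f =>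
          if T < 1 + ref (Φ + 1) (pert (Φ + 1) (alphaF T pert ref σ F (Φ + 1))) then
            alphaF T pert ref σ F (Φ + 1) + σ (Φ + 1) - f
          else alphaF T pert ref σ F (Φ + 1)) := by
  conv_lhs => rw [alphaF]
  simp only [dif_neg h]

lemma alphaF_congr (T : ℕ) (pert ref : ℕ → ℕ → ℕ) (σ : ℕ → ℕ) :
    ∀ (n Φ : ℕ), T - Φ ≤ n → ∀ {F F' : ℕ → Option ℕ}, (∀ Ψ, Φ < Ψ → F Ψ = F' Ψ) →
      alphaF T pert ref σ F Φ = alphaF T pert ref σ F' Φ := by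
  intro n
  induction n with
  | zero =>
    intro Φ hΦ F F' h
    rw [alphaF_stop _ _ _ _ _ _ (by omega), alphaF_stop _ _ _ _ _ _ (by omega)]
  | succ n ih =>
    intro Φ hΦ F F' h
    by_cases hT : T ≤ Φ
    · rw [alphaF_stop _ _ _ _ _ _ hT, alphaF_stop _ _ _ _ _ _ hT]
    · rw [alphaF_go _ _ _ _ _ _ hT, alphaF_go _ _ _ _ _ _ hT]
      have ha : alphaF T pert ref σ F (Φ + 1) = alphaF T pert ref σ F' (Φ + 1) :=
        ih (Φ + 1) (by omega) (fun Ψ hΨ => h Ψ (by omega))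
      rw [ha, h (Φ + 1) (by omega)]

lemma updateF_congr (T : ℕ) (pert ref : ℕ → ℕ → ℕ) (σ : ℕ → ℕ) (Φ : ℕ)
    {F F' : ℕ → Option ℕ} (h : ∀ Ψ, Φ < Ψ → F Ψ = F' Ψ) :
    updateF T pert ref σ F Φ = updateF T pert ref σ F' Φ := by
  unfold updateF
  rw [alphaF_congr T pert ref σ (T - Φ) Φ le_rfl h]

/-- binomial: `∑_{f=0}^{k} pfail(k,f) = 1`. -/
lemma sum_pfailR (μ : ℝ) (k : ℕ) : ∑ f ∈ Finset.range (k + 1), pfailR μ k f = 1 := by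
  have h := add_pow μ (1 - μ) k
  have h1 : μ + (1 - μ) = 1 := by ring
  rw [h1, one_pow] at h
  simpa [pfailR] using h.symm

/-- tsum over a finite set. -/
lemma tsum_set_finite {α : Type*} {s : Set α} (hs : s.Finite) (f : α → ℝ) :
    ∑' x : s, f x = ∑ x ∈ hs.toFinset, f x := by
  rw [tsum_subtype]
  rw [tsum_eq_sum (s := hs.toFinset)
    (fun b hb => Set.indicator_of_notMem (fun h => hb (hs.mem_toFinset.mpr h)) f)]
  exact Finset.sum_congr rfl fun x hx => Set.indicator_of_mem (hs.mem_toFinset.mp hx) f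

/-- the factor of `pfailvecR` at one phase. -/
def factor (μ : ℝ) (σ : ℕ → ℕ) (F : ℕ → Option ℕ) (Φ : ℕ) : ℝ :=
  match F Φ with | some f => pfailR μ (σ Φ) f | none => 1

/-- the set of failure vectors determined on `[1,m]`, agreeing with `G` elsewhere. -/
def S (T : ℕ) (pert ref : ℕ → ℕ → ℕ) (σ : ℕ → ℕ) (m : ℕ) (G : ℕ → Option ℕ) :
    Set (ℕ → Option ℕ) :=
  { F | (∀ Φ, 1 ≤ Φ → Φ ≤ m →
          ((T < updateF T pert ref σ F Φ → ∃ f, F Φ = some f ∧ f ≤ σ Φ) ∧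
           (¬ T < updateF T pert ref σ F Φ → F Φ = none))) ∧
        (∀ Φ, Φ = 0 ∨ m < Φ → F Φ = G Φ) }

lemma key (T : ℕ) (pert ref : ℕ → ℕ → ℕ) (σ : ℕ → ℕ) (μ : ℝ) :
    ∀ (m : ℕ) (G : ℕ → Option ℕ), ∃ h : (S T pert ref σ m G).Finite,
      ∑ F ∈ h.toFinset, ∏ Φ ∈ Finset.Icc 1 m, factor μ σ F Φ = 1 := by
  intro m
  induction m with
  | zero =>
    intro G
    have hset : S T pert ref σ 0 G = {G} := by
      ext F
      simp only [S, Set.mem_setOf_eq, Set.mem_singleton_iff]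
      constructor
      · rintro ⟨-, h2⟩
        funext Φ
        rcases Nat.eq_zero_or_pos Φ with h | h
        · exact h ▸ h2 0 (Or.inl rfl)
        · exact h2 Φ (Or.inr h)
      · rintro rfl
        exact ⟨fun Φ h1 h2 => absurd (h1.trans h2) (by omega), fun _ _ => rfl⟩
    have hfin : (S T pert ref σ 0 G).Finite := by rw [hset]; exact Set.finite_singleton G
    refine ⟨hfin, ?_⟩
    have ht : hfin.toFinset = {G} := by
      apply Finset.coe_injective
      rw [Set.Finite.coe_toFinset, hset]
      simp
    rw [ht]
    simp
  | succ m ih =>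
    intro G
    by_cases hfire : T < updateF T pert ref σ G (m + 1)
    · -- firing case
      classical
      choose hf hsumf using fun f : ℕ => ih (Function.update G (m + 1) (some f))
      have hmem : ∀ F, F ∈ S T pert ref σ (m + 1) G ↔
          ∃ f ≤ σ (m + 1), F ∈ S T pert ref σ m (Function.update G (m + 1) (some f)) := by
        intro F
        constructor
        · rintro ⟨h1, h2⟩
          have hFG : updateF T pert ref σ F (m + 1) = updateF T pert ref σ G (m + 1) :=
            updateF_congr T pert ref σ (m + 1) (fun Ψ hΨ => h2 Ψ (Or.inr (by omega)))
          obtain ⟨f, hFf, hfle⟩ := (h1 (m + 1) (by omega) le_rfl).1 (hFG ▸ hfire)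
          refine ⟨f, hfle, ⟨fun Φ hΦ1 hΦm => h1 Φ hΦ1 (by omega), ?_⟩⟩
          intro Φ hΦ
          rcases hΦ with rfl | hΦ
          · rw [h2 0 (Or.inl rfl), Function.update_of_ne (by omega)]
          · by_cases hΦ' : Φ = m + 1
            · subst hΦ'; rw [hFf, Function.update_self]
            · rw [h2 Φ (Or.inr (by omega)), Function.update_of_ne hΦ']
        · rintro ⟨f, hfle, h1, h2⟩
          have hFG' : ∀ Ψ, m + 1 < Ψ → F Ψ = G Ψ := fun Ψ hΨ => by
            rw [h2 Ψ (Or.inr (by omega)), Function.update_of_ne (by omega)]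
          have hFG : updateF T pert ref σ F (m + 1) = updateF T pert ref σ G (m + 1) :=
            updateF_congr T pert ref σ (m + 1) hFG'
          have hFf : F (m + 1) = some f := by
            rw [h2 (m + 1) (Or.inr (by omega)), Function.update_self]
          refine ⟨fun Φ hΦ1 hΦm => ?_, fun Φ hΦ => ?_⟩
          · rcases Nat.lt_or_ge Φ (m + 1) with hlt | hge
            · exact h1 Φ hΦ1 (by omega)
            · have : Φ = m + 1 := by omega
              subst this
              exact ⟨fun _ => ⟨f, hFf, hfle⟩, fun hn => absurd (hFG ▸ hfire) hn⟩
          · rcases hΦ with rfl | hΦ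
            · rw [h2 0 (Or.inl rfl), Function.update_of_ne (by omega)]
            · exact hFG' Φ hΦ
      have hset : S T pert ref σ (m + 1) G =
          ⋃ f ∈ Finset.range (σ (m + 1) + 1),
            S T pert ref σ m (Function.update G (m + 1) (some f)) := by
        ext F
        simp only [Set.mem_iUnion, Finset.mem_range, hmem F, exists_prop]
        constructor
        · rintro ⟨f, h1, h2⟩; exact ⟨f, by omega, h2⟩
        · rintro ⟨f, h1, h2⟩; exact ⟨f, by omega, h2⟩
      have hfin : (S T pert ref σ (m + 1) G).Finite := by
        rw [hset]
        exact Set.Finite.biUnion (Finset.range (σ (m + 1) + 1)).finite_toSet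
          (fun f _ => hf f)
      refine ⟨hfin, ?_⟩
      have ht : hfin.toFinset = (Finset.range (σ (m + 1) + 1)).biUnion
          (fun f => (hf f).toFinset) := by
        apply Finset.coe_injective
        simp only [Set.Finite.coe_toFinset, Finset.coe_biUnion, Finset.mem_coe]
        rw [hset]
      rw [ht, Finset.sum_biUnion]
      · have hterm : ∀ f ∈ Finset.range (σ (m + 1) + 1),
            ∑ F ∈ (hf f).toFinset, ∏ Φ ∈ Finset.Icc 1 (m + 1), factor μ σ F Φ
              = pfailR μ (σ (m + 1)) f := by
          intro f _
          have : ∀ F ∈ (hf f).toFinset,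
              ∏ Φ ∈ Finset.Icc 1 (m + 1), factor μ σ F Φ
                = pfailR μ (σ (m + 1)) f * ∏ Φ ∈ Finset.Icc 1 m, factor μ σ F Φ := by
            intro F hF
            rw [Set.Finite.mem_toFinset] at hF
            have hFf : F (m + 1) = some f := by
              rw [hF.2 (m + 1) (Or.inr (by omega)), Function.update_self]
            rw [Finset.prod_Icc_succ_top (by omega : 1 ≤ m + 1)]
            rw [mul_comm]
            congr 1
            simp [factor, hFf]
          rw [Finset.sum_congr rfl this, ← Finset.mul_sum, hsumf f, mul_one]
        rw [Finset.sum_congr rfl hterm]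
        exact sum_pfailR μ (σ (m + 1))
      · -- pairwise disjoint
        intro a ha b hb hab
        simp only [Finset.coe_range] at ha hb
        refine Finset.disjoint_left.mpr fun F hFa hFb => hab ?_
        rw [Set.Finite.mem_toFinset] at hFa hFb
        have h1 : F (m + 1) = some a := by
          rw [hFa.2 (m + 1) (Or.inr (by omega)), Function.update_self]
        have h2 : F (m + 1) = some b := by
          rw [hFb.2 (m + 1) (Or.inr (by omega)), Function.update_self]
        rw [h1] at h2
        exact Option.some_injective _ h2
    · -- non-firing case
      obtain ⟨hf0, hsum0⟩ := ih (Function.update G (m + 1) none)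
      have hmem : ∀ F, F ∈ S T pert ref σ (m + 1) G ↔
          F ∈ S T pert ref σ m (Function.update G (m + 1) none) := by
        intro F
        constructor
        · rintro ⟨h1, h2⟩
          have hFG : updateF T pert ref σ F (m + 1) = updateF T pert ref σ G (m + 1) :=
            updateF_congr T pert ref σ (m + 1) (fun Ψ hΨ => h2 Ψ (Or.inr (by omega)))
          have hFn : F (m + 1) = none :=
            (h1 (m + 1) (by omega) le_rfl).2 (hFG ▸ hfire)
          refine ⟨fun Φ hΦ1 hΦm => h1 Φ hΦ1 (by omega), fun Φ hΦ => ?_⟩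
          rcases hΦ with rfl | hΦ
          · rw [h2 0 (Or.inl rfl), Function.update_of_ne (by omega)]
          · by_cases hΦ' : Φ = m + 1
            · subst hΦ'; rw [hFn, Function.update_self]
            · rw [h2 Φ (Or.inr (by omega)), Function.update_of_ne hΦ']
        · rintro ⟨h1, h2⟩
          have hFG' : ∀ Ψ, m + 1 < Ψ → F Ψ = G Ψ := fun Ψ hΨ => by
            rw [h2 Ψ (Or.inr (by omega)), Function.update_of_ne (by omega)]
          have hFG : updateF T pert ref σ F (m + 1) = updateF T pert ref σ G (m + 1) :=
            updateF_congr T pert ref σ (m + 1) hFG'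
          have hFn : F (m + 1) = none := by
            rw [h2 (m + 1) (Or.inr (by omega)), Function.update_self]
          refine ⟨fun Φ hΦ1 hΦm => ?_, fun Φ hΦ => ?_⟩
          · rcases Nat.lt_or_ge Φ (m + 1) with hlt | hge
            · exact h1 Φ hΦ1 (by omega)
            · have : Φ = m + 1 := by omega
              subst this
              exact ⟨fun hn => absurd hn (hFG ▸ hfire), fun _ => hFn⟩
          · rcases hΦ with rfl | hΦ
            · rw [h2 0 (Or.inl rfl), Function.update_of_ne (by omega)]
            · exact hFG' Φ hΦ
      have hset : S T pert ref σ (m + 1) G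
          = S T pert ref σ m (Function.update G (m + 1) none) := Set.ext hmem
      have hfin : (S T pert ref σ (m + 1) G).Finite := by rw [hset]; exact hf0
      refine ⟨hfin, ?_⟩
      have ht : hfin.toFinset = hf0.toFinset := by
        apply Finset.coe_injective
        simp only [Set.Finite.coe_toFinset]
        exact hset
      rw [ht]
      rw [← hsum0]
      refine Finset.sum_congr rfl fun F hF => ?_
      rw [Set.Finite.mem_toFinset] at hF
      have hFn : F (m + 1) = none := by
        rw [hF.2 (m + 1) (Or.inr (by omega)), Function.update_self]
      rw [Finset.prod_Icc_succ_top (by omega : 1 ≤ m + 1)]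
      have : factor μ σ F (m + 1) = 1 := by simp [factor, hFn]
      rw [this, mul_one]

end PFAux

/-- For any global state σ, pfailvec(σ,·) is a discrete probability distribution
over the set of possible failure vectors of σ. -/
theorem pfailvec_distribution (T N : ℕ) (pert ref : ℕ → ℕ → ℕ) (σ : ℕ → ℕ) (μ : ℝ)
    (hT : 0 < T) (hμ0 : 0 ≤ μ) (hμ1 : μ ≤ 1)
    (hout : ∀ Φ, Φ = 0 ∨ T < Φ → σ Φ = 0)
    (hsum : ∑ Φ ∈ Finset.Icc 1 T, σ Φ = N) :
    ∑' F : failSet T pert ref σ, pfailvecR μ T σ F = 1 := by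
  have hfail : failSet T pert ref σ = PFAux.S T pert ref σ T (fun _ => none) := rfl
  obtain ⟨hfin, hsum'⟩ := PFAux.key T pert ref σ μ T (fun _ => none)
  have hfin' : (failSet T pert ref σ).Finite := hfail ▸ hfin
  rw [PFAux.tsum_set_finite hfin']
  have ht : hfin'.toFinset = hfin.toFinset := by
    apply Finset.coe_injective
    simp only [Set.Finite.coe_toFinset]
    exact hfail
  rw [ht, ← hsum']
  exact Finset.sum_congr rfl fun F _ => rfl
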